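/- Let 1 ≤ p < ∞ and let (X_j)_{j=1}^∞ be a sequence of nonzero real Banach spaces. Then t(ℓ_p(X_j)) ≥ sup_j ((t(X_j) − 1)^p + 1)^{1/p}. Moreover, if sup_j t(X_j) = 2, then t(ℓ_p(X_j)) = 2^{1/p}. -/

import Mathlib

open ENNReal

/-- The thinness index `t(X)` of a normed space. -/
noncomputable def thinness (X : Type*) [NormedAddCommGroup X] : ℝ :=
  sInf {r : ℝ | 0 < r ∧ ∀ (n : ℕ) (x : Fin n → X), (∀ i, ‖x i‖ = 1) →
    ∀ ε : ℝ, 0 < ε → ∃ y : X, ‖y‖ = 1 ∧ ∀ i, ‖x i - y‖ < r + ε}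

namespace ThinnessAux

open Filter

/-- The defining set of admissible radii. -/
def thinSet (X : Type*) [NormedAddCommGroup X] : Set ℝ :=
  {r : ℝ | 0 < r ∧ ∀ (n : ℕ) (x : Fin n → X), (∀ i, ‖x i‖ = 1) →
    ∀ ε : ℝ, 0 < ε → ∃ y : X, ‖y‖ = 1 ∧ ∀ i, ‖x i - y‖ < r + ε}

lemma thinness_def (X : Type*) [NormedAddCommGroup X] : thinness X = sInf (thinSet X) := rfl

lemma bddBelow_thinSet (X : Type*) [NormedAddCommGroup X] : BddBelow (thinSet X) :=
  ⟨0, fun _ hs => hs.1.le⟩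

lemma exists_unit (X : Type*) [NormedAddCommGroup X] [NormedSpace ℝ X] [Nontrivial X] :
    ∃ u : X, ‖u‖ = 1 := by
  obtain ⟨x, hx⟩ := exists_ne (0 : X)
  exact ⟨‖x‖⁻¹ • x, by
    rw [norm_smul, norm_inv, norm_norm, inv_mul_cancel₀ (norm_ne_zero_iff.2 hx)]⟩

lemma two_mem_thinSet {X : Type*} [NormedAddCommGroup X] (hu : ∃ u : X, ‖u‖ = 1) :
    (2 : ℝ) ∈ thinSet X := by
  obtain ⟨u, hu⟩ := hu
  refine ⟨two_pos, fun n x hx ε hε => ⟨u, hu, fun i => ?_⟩⟩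
  calc ‖x i - u‖ ≤ ‖x i‖ + ‖u‖ := norm_sub_le _ _
    _ = 2 := by rw [hx i, hu]; norm_num
    _ < 2 + ε := by linarith

lemma one_le_of_mem_thinSet {X : Type*} [NormedAddCommGroup X] [NormedSpace ℝ X]
    (hu : ∃ u : X, ‖u‖ = 1)
    {r : ℝ} (hr : r ∈ thinSet X) : 1 ≤ r := by
  obtain ⟨u, hu⟩ := hu
  by_contra h
  push_neg at h
  obtain ⟨y, hy, hxy⟩ := hr.2 2 ![u, -u]
    (by intro i; fin_cases i <;> simp [hu]) ((1 - r) / 2) (by linarith)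
  have h0 := hxy 0
  have h1 := hxy 1
  simp only [Matrix.cons_val_zero, Matrix.cons_val_one, Matrix.head_cons] at h0 h1
  have h2 : (u - y) - (-u - y) = (2 : ℝ) • u := by rw [two_smul]; abel
  have h3 : ‖(2 : ℝ) • u‖ = 2 := by rw [norm_smul, hu]; simp
  have h4 := norm_sub_le (u - y) (-u - y)
  rw [h2, h3] at h4
  linarith

/-- Superadditivity of `x ↦ x ^ q` for `q ≥ 1`, in the reverse form. -/
lemma rpow_add_le {q x y : ℝ} (hq : 1 ≤ q) (hx : 0 ≤ x) (hy : 0 ≤ y) :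
    (x + y) ^ (1 / q) ≤ x ^ (1 / q) + y ^ (1 / q) := by
  have hq0 : 0 < q := lt_of_lt_of_le one_pos hq
  have hxn : (0 : ℝ) ≤ x ^ (1 / q) := Real.rpow_nonneg hx _
  have hyn : (0 : ℝ) ≤ y ^ (1 / q) := Real.rpow_nonneg hy _
  have key : x + y ≤ (x ^ (1 / q) + y ^ (1 / q)) ^ q := by
    have h := NNReal.add_rpow_le_rpow_add
      (Real.toNNReal (x ^ (1 / q))) (Real.toNNReal (y ^ (1 / q))) hq
    have h' := (NNReal.coe_le_coe).2 h
    push_cast [NNReal.coe_rpow, Real.coe_toNNReal _ hxn, Real.coe_toNNReal _ hyn] at h'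
    have hx' : (x ^ (1 / q)) ^ q = x := by rw [one_div, Real.rpow_inv_rpow hx hq0.ne']
    have hy' : (y ^ (1 / q)) ^ q = y := by rw [one_div, Real.rpow_inv_rpow hy hq0.ne']
    rw [hx', hy'] at h'
    exact h'
  calc (x + y) ^ (1 / q) ≤ ((x ^ (1 / q) + y ^ (1 / q)) ^ q) ^ (1 / q) :=
        Real.rpow_le_rpow (by positivity) key (by positivity)
    _ = x ^ (1 / q) + y ^ (1 / q) := by
        rw [one_div, Real.rpow_rpow_inv (by positivity) hq0.ne']

variable {p : ℝ≥0∞} [Fact (1 ≤ p)] {X : ℕ → Type*} [∀ j, NormedAddCommGroup (X j)]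

lemma norm_decomp (hq : 0 < p.toReal) (f : lp X p) (j : ℕ) :
    ‖f‖ ^ p.toReal = ‖f j‖ ^ p.toReal + ∑' k, if k = j then 0 else ‖f k‖ ^ p.toReal := by
  have h := lp.hasSum_norm hq f
  rw [← h.tsum_eq, h.summable.tsum_eq_add_tsum_ite j]

lemma norm_single_unit (hq : 0 < p.toReal) {j : ℕ} {u : X j} (hu : ‖u‖ = 1) :
    ‖lp.single p j u‖ = 1 := by
  have h := lp.norm_single (E := X) (ENNReal.toReal_pos_iff.1 hq).1 j u
  rw [h, hu]

lemma norm_decomp_sub_single (hq : 0 < p.toReal) (f : lp X p) (j : ℕ) (u : X j) :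
    ‖f - lp.single p j u‖ ^ p.toReal
      = ‖f j - u‖ ^ p.toReal + ∑' k, if k = j then 0 else ‖f k‖ ^ p.toReal := by
  rw [norm_decomp hq _ j]
  congr 1
  · have h : (f - lp.single p j u) j = f j - u := by
      have := lp.coeFn_sub f (lp.single p j u)
      rw [show ((f - lp.single p j u) j) = (⇑(f - lp.single p j u)) j from rfl, this]
      simp [lp.single_apply_self]
    rw [h]
  · refine tsum_congr fun k => ?_
    by_cases hk : k = j
    · simp [hk]
    · have h : (f - lp.single p j u) k = f k := by
        have := lp.coeFn_sub f (lp.single p j u)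
        rw [show ((f - lp.single p j u) k) = (⇑(f - lp.single p j u)) k from rfl, this]
        simp [lp.single_apply_ne p j u hk, Pi.single_eq_of_ne hk]
      simp [hk, h]

variable [∀ j, NormedSpace ℝ (X j)] [∀ j, Nontrivial (X j)]

/-- Key lower-bound lemma: any admissible radius `r` for `ℓ_p(X)` gives the admissible
radius `(r^q - 1)^(1/q) + 1` for each `X j`. -/
lemma lower (hp : p ≠ ⊤) (j : ℕ) {r : ℝ} (hr : r ∈ thinSet (lp X p)) :
    thinness (X j) ≤ (r ^ p.toReal - 1) ^ (1 / p.toReal) + 1 := by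
  set q := p.toReal with hqdef
  have hq1 : 1 ≤ q := by
    rw [← ENNReal.toReal_one]; exact ENNReal.toReal_mono hp Fact.out
  have hq0 : 0 < q := lt_of_lt_of_le one_pos hq1
  obtain ⟨u0, hu0⟩ := exists_unit (X 0)
  have h1r : 1 ≤ r :=
    one_le_of_mem_thinSet ⟨lp.single p 0 u0, norm_single_unit hq0 hu0⟩ hr
  have hrq1 : (0 : ℝ) ≤ r ^ q - 1 := by
    have := Real.one_le_rpow h1r hq0.le; linarith
  have hrpow_nn : (0 : ℝ) ≤ (r ^ q - 1) ^ (1 / q) := Real.rpow_nonneg hrq1 _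
  refine le_of_forall_pos_le_add fun δ hδ => ?_
  rw [thinness_def]
  refine csInf_le (bddBelow_thinSet _) ⟨by linarith, fun n u hu ε hε => ?_⟩
  have hδq : 0 < δ ^ q := Real.rpow_pos_of_pos hδ _
  set R := (r ^ q + δ ^ q) ^ (1 / q) with hRdef
  have hRq : R ^ q = r ^ q + δ ^ q := by
    rw [hRdef, one_div, Real.rpow_inv_rpow (by positivity) hq0.ne']
  have hrR : r < R := by
    calc r = (r ^ q) ^ (1 / q) := by
          rw [one_div, Real.rpow_rpow_inv (by linarith) hq0.ne']
      _ < (r ^ q + δ ^ q) ^ (1 / q) :=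
          Real.rpow_lt_rpow (by positivity) (by linarith) (by positivity)
  obtain ⟨y, hy1, hyx⟩ := hr.2 n (fun i => lp.single p j (u i))
    (fun i => norm_single_unit hq0 (hu i)) (R - r) (by linarith)
  have hyx' : ∀ i, ‖y - lp.single p j (u i)‖ ≤ R := by
    intro i
    have h := hyx i
    rw [norm_sub_rev] at h
    linarith
  set a := ‖y j‖ with hadef
  set T := ∑' k, if k = j then (0 : ℝ) else ‖y k‖ ^ q with hTdef
  have hTnn : 0 ≤ T := tsum_nonneg fun k => by positivity
  have hdecy : a ^ q + T = 1 := by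
    have h := norm_decomp hq0 y j
    rw [hy1, Real.one_rpow] at h
    exact h.symm
  have ha0 : 0 ≤ a := norm_nonneg _
  have ha1 : a ≤ 1 := by
    by_contra h
    push_neg at h
    have := Real.rpow_lt_rpow zero_le_one h hq0
    rw [Real.one_rpow] at this
    linarith
  have hbd : ∀ i, ‖u i - y j‖ ≤ (r ^ q - 1 + δ ^ q) ^ (1 / q) + a := by
    intro i
    have hd := norm_decomp_sub_single hq0 y j (u i)
    have hle : ‖y j - u i‖ ^ q + T ≤ R ^ q := by
      rw [← hd]
      exact Real.rpow_le_rpow (norm_nonneg _) (hyx' i) hq0.le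
    have hb2 : ‖y j - u i‖ ^ q ≤ (r ^ q - 1 + δ ^ q) + a ^ q := by
      rw [hRq] at hle; linarith
    have hb3 : ‖y j - u i‖ ≤ ((r ^ q - 1 + δ ^ q) + a ^ q) ^ (1 / q) := by
      calc ‖y j - u i‖ = (‖y j - u i‖ ^ q) ^ (1 / q) := by
            rw [one_div, Real.rpow_rpow_inv (norm_nonneg _) hq0.ne']
        _ ≤ _ := Real.rpow_le_rpow (by positivity) hb2 (by positivity)
    calc ‖u i - y j‖ = ‖y j - u i‖ := norm_sub_rev _ _
      _ ≤ ((r ^ q - 1 + δ ^ q) + a ^ q) ^ (1 / q) := hb3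
      _ ≤ (r ^ q - 1 + δ ^ q) ^ (1 / q) + (a ^ q) ^ (1 / q) :=
          rpow_add_le hq1 (by positivity) (by positivity)
      _ = (r ^ q - 1 + δ ^ q) ^ (1 / q) + a := by
          rw [one_div, Real.rpow_rpow_inv ha0 hq0.ne']
  have hsum : (r ^ q - 1 + δ ^ q) ^ (1 / q) ≤ (r ^ q - 1) ^ (1 / q) + δ := by
    calc (r ^ q - 1 + δ ^ q) ^ (1 / q) ≤ (r ^ q - 1) ^ (1 / q) + (δ ^ q) ^ (1 / q) :=
          rpow_add_le hq1 hrq1 hδq.le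
      _ = _ := by rw [one_div, Real.rpow_rpow_inv hδ.le hq0.ne']
  by_cases hyj : y j = 0
  · obtain ⟨z, hz⟩ := exists_unit (X j)
    refine ⟨z, hz, fun i => ?_⟩
    have tri : ‖u i - z‖ ≤ ‖u i - y j‖ + ‖y j - z‖ := by
      calc ‖u i - z‖ = ‖(u i - y j) + (y j - z)‖ := by congr 1; abel
        _ ≤ _ := norm_add_le _ _
    have hz1 : ‖y j - z‖ = 1 := by rw [hyj, zero_sub, norm_neg, hz]
    have ha : a = 0 := by rw [hadef, hyj, norm_zero]
    rw [hz1] at tri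
    linarith [hbd i, hsum]
  · have hapos : 0 < a := norm_pos_iff.2 hyj
    set z := a⁻¹ • y j with hzdef
    have hz : ‖z‖ = 1 := by
      rw [hzdef, norm_smul, norm_inv, Real.norm_eq_abs, abs_of_nonneg ha0, ← hadef,
        inv_mul_cancel₀ hapos.ne']
    have hinv : 1 ≤ a⁻¹ := by
      rw [← one_div]
      exact (le_div_iff₀ hapos).2 (by linarith)
    have hyz : ‖y j - z‖ = 1 - a := by
      have hsub : y j - z = (1 - a⁻¹) • y j := by
        rw [hzdef, sub_smul, one_smul]
      rw [hsub, norm_smul, Real.norm_eq_abs, abs_of_nonpos (by linarith), ← hadef, neg_sub,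
        sub_mul, inv_mul_cancel₀ hapos.ne', one_mul]
    refine ⟨z, hz, fun i => ?_⟩
    have tri : ‖u i - z‖ ≤ ‖u i - y j‖ + ‖y j - z‖ := by
      calc ‖u i - z‖ = ‖(u i - y j) + (y j - z)‖ := by congr 1; abel
        _ ≤ _ := norm_add_le _ _
    rw [hyz] at tri
    linarith [hbd i, hsum]

/-- Upper bound: `t(ℓ_p(X)) ≤ 2^(1/q)`. -/
lemma upper (hp : p ≠ ⊤) : thinness (lp X p) ≤ 2 ^ (1 / p.toReal) := by
  set q := p.toReal with hqdef
  have hq1 : 1 ≤ q := by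
    rw [← ENNReal.toReal_one]; exact ENNReal.toReal_mono hp Fact.out
  have hq0 : 0 < q := lt_of_lt_of_le one_pos hq1
  have h2q : (0 : ℝ) < 2 ^ (1 / q) := Real.rpow_pos_of_pos two_pos _
  refine le_of_forall_pos_le_add fun δ hδ => ?_
  rw [thinness_def]
  refine csInf_le (bddBelow_thinSet _) ⟨by linarith, fun n x hx ε hε => ?_⟩
  have hθ : 0 < δ / 2 := by linarith
  have htail : ∀ i : Fin n, ∀ᶠ k in atTop, ‖x i k‖ ^ q < (δ / 2) ^ q := fun i =>
    ((lp.hasSum_norm hq0 (x i)).summable.tendsto_atTop_zero).eventually_lt_const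
      (Real.rpow_pos_of_pos hθ q)
  obtain ⟨j₀, hj₀⟩ := (eventually_all.2 htail).exists
  have hsmall : ∀ i, ‖x i j₀‖ ≤ δ / 2 := by
    intro i
    by_contra h
    push_neg at h
    exact absurd (hj₀ i) (not_lt.2 (Real.rpow_le_rpow hθ.le h.le hq0.le))
  obtain ⟨u, hu⟩ := exists_unit (X j₀)
  refine ⟨lp.single p j₀ u, norm_single_unit hq0 hu, fun i => ?_⟩
  have hd := norm_decomp_sub_single hq0 (x i) j₀ u
  have hrest : (∑' k, if k = j₀ then (0 : ℝ) else ‖x i k‖ ^ q) ≤ 1 := by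
    have h2 := norm_decomp hq0 (x i) j₀
    rw [hx i, Real.one_rpow] at h2
    have h3 : (0 : ℝ) ≤ ‖x i j₀‖ ^ q := by positivity
    linarith
  have hq' : ‖x i - lp.single p j₀ u‖ ^ q ≤ (1 + δ / 2) ^ q + 1 := by
    rw [hd]
    refine add_le_add ?_ hrest
    refine Real.rpow_le_rpow (norm_nonneg _) ?_ hq0.le
    calc ‖x i j₀ - u‖ ≤ ‖x i j₀‖ + ‖u‖ := norm_sub_le _ _
      _ ≤ 1 + δ / 2 := by rw [hu]; linarith [hsmall i]
  have hfin : ‖x i - lp.single p j₀ u‖ ≤ (1 + δ / 2) * 2 ^ (1 / q) := by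
    have h1 : (0 : ℝ) ≤ 1 + δ / 2 := by linarith
    calc ‖x i - lp.single p j₀ u‖ = (‖x i - lp.single p j₀ u‖ ^ q) ^ (1 / q) := by
          rw [one_div, Real.rpow_rpow_inv (norm_nonneg _) hq0.ne']
      _ ≤ ((1 + δ / 2) ^ q + 1) ^ (1 / q) :=
          Real.rpow_le_rpow (by positivity) hq' (by positivity)
      _ ≤ ((1 + δ / 2) ^ q * 2) ^ (1 / q) := by
          refine Real.rpow_le_rpow (by positivity) ?_ (by positivity)
          have : (1 : ℝ) ≤ (1 + δ / 2) ^ q := by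
            calc (1 : ℝ) = 1 ^ q := (Real.one_rpow q).symm
              _ ≤ (1 + δ / 2) ^ q := Real.rpow_le_rpow zero_le_one (by linarith) hq0.le
          linarith
      _ = (1 + δ / 2) * 2 ^ (1 / q) := by
          rw [Real.mul_rpow (by positivity) (by norm_num), one_div,
            Real.rpow_rpow_inv h1 hq0.ne']
  have h2le : (2 : ℝ) ^ (1 / q) ≤ 2 := by
    calc (2 : ℝ) ^ (1 / q) ≤ 2 ^ (1 : ℝ) :=
          Real.rpow_le_rpow_of_exponent_le one_le_two ((div_le_one hq0).2 hq1)
      _ = 2 := Real.rpow_one 2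
  nlinarith [hfin, hθ]

end ThinnessAux

open ThinnessAux

/-- For `1 ≤ p < ∞` and a sequence of nonzero Banach spaces `(X_j)`,
`t(ℓ_p(X_j)) ≥ sup_j ((t(X_j) - 1)^p + 1)^(1/p)`; moreover, if `sup_j t(X_j) = 2`, then
`t(ℓ_p(X_j)) = 2^(1/p)`. -/
theorem thinness_lpSum (p : ℝ≥0∞) [Fact (1 ≤ p)] (hp : p ≠ ⊤)
    (X : ℕ → Type*) [∀ j, NormedAddCommGroup (X j)] [∀ j, NormedSpace ℝ (X j)]
    [∀ j, CompleteSpace (X j)] [∀ j, Nontrivial (X j)] :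
    (⨆ j, ((thinness (X j) - 1) ^ p.toReal + 1) ^ (1 / p.toReal)) ≤ thinness (lp X p) ∧
      ((⨆ j, thinness (X j)) = 2 → thinness (lp X p) = 2 ^ (1 / p.toReal)) := by
  set q := p.toReal with hqdef
  have hq1 : 1 ≤ q := by
    rw [← ENNReal.toReal_one]; exact ENNReal.toReal_mono hp Fact.out
  have hq0 : 0 < q := lt_of_lt_of_le one_pos hq1
  have hqne : q ≠ 0 := hq0.ne'
  have lpunit : ∃ u : lp X p, ‖u‖ = 1 := by
    obtain ⟨u, hu⟩ := exists_unit (X 0)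
    exact ⟨lp.single p 0 u, norm_single_unit hq0 hu⟩
  have hlpne : (thinSet (lp X p)).Nonempty := ⟨2, two_mem_thinSet lpunit⟩
  have hXne : ∀ j, ∃ u : X j, ‖u‖ = 1 := fun j => exists_unit (X j)
  have h1tj : ∀ j, 1 ≤ thinness (X j) := fun j => by
    rw [thinness_def]
    exact le_csInf ⟨2, two_mem_thinSet (hXne j)⟩ fun s hs => one_le_of_mem_thinSet (hXne j) hs
  have htj2 : ∀ j, thinness (X j) ≤ 2 := fun j => by
    rw [thinness_def]
    exact csInf_le (bddBelow_thinSet _) (two_mem_thinSet (hXne j))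
  have hpart1 : (⨆ j, ((thinness (X j) - 1) ^ q + 1) ^ (1 / q)) ≤ thinness (lp X p) := by
    refine ciSup_le fun j => ?_
    rw [thinness_def (lp X p)]
    refine le_csInf hlpne fun r hr => ?_
    have hkey := lower hp j hr
    have h1r : 1 ≤ r := one_le_of_mem_thinSet lpunit hr
    have hrq1 : (0 : ℝ) ≤ r ^ q - 1 := by
      have := Real.one_le_rpow h1r hq0.le; linarith
    have htj1 : (0 : ℝ) ≤ thinness (X j) - 1 := by linarith [h1tj j]
    have h2 : thinness (X j) - 1 ≤ (r ^ q - 1) ^ (1 / q) := by linarith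
    have h3 : (thinness (X j) - 1) ^ q ≤ r ^ q - 1 := by
      calc (thinness (X j) - 1) ^ q ≤ ((r ^ q - 1) ^ (1 / q)) ^ q :=
            Real.rpow_le_rpow htj1 h2 hq0.le
        _ = r ^ q - 1 := by rw [one_div, Real.rpow_inv_rpow hrq1 hqne]
    have hnn : (0 : ℝ) ≤ (thinness (X j) - 1) ^ q + 1 := by
      have := Real.rpow_nonneg htj1 q; linarith
    calc ((thinness (X j) - 1) ^ q + 1) ^ (1 / q) ≤ (r ^ q) ^ (1 / q) :=
          Real.rpow_le_rpow hnn (by linarith) (by positivity)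
      _ = r := by rw [one_div, Real.rpow_rpow_inv (by linarith) hqne]
  refine ⟨hpart1, fun hsup => ?_⟩
  refine le_antisymm (upper hp) (le_trans ?_ hpart1)
  have hbdd : BddAbove (Set.range fun j => ((thinness (X j) - 1) ^ q + 1) ^ (1 / q)) := by
    refine ⟨2 ^ (1 / q), ?_⟩
    rintro _ ⟨j, rfl⟩
    have htj1 : (0 : ℝ) ≤ thinness (X j) - 1 := by linarith [h1tj j]
    have h1 : (thinness (X j) - 1) ^ q ≤ 1 := by
      calc (thinness (X j) - 1) ^ q ≤ 1 ^ q :=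
            Real.rpow_le_rpow htj1 (by linarith [htj2 j]) hq0.le
        _ = 1 := Real.one_rpow q
    have hnn : (0 : ℝ) ≤ (thinness (X j) - 1) ^ q + 1 := by
      have := Real.rpow_nonneg htj1 q; linarith
    exact Real.rpow_le_rpow hnn (by linarith) (by positivity)
  refine le_of_forall_pos_le_add fun ε hε => ?_
  set η := min (ε ^ q / q) (1 / 2) with hηdef
  have hηpos : 0 < η := lt_min (by positivity) (by norm_num)
  have hη1 : η ≤ 1 / 2 := min_le_right _ _
  obtain ⟨j, hj⟩ := exists_lt_of_lt_ciSup
    (show (2 : ℝ) - η < ⨆ j, thinness (X j) by rw [hsup]; linarith)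
  have hs1 : 1 - η ≤ thinness (X j) - 1 := by linarith
  have hs0 : (0 : ℝ) ≤ 1 - η := by linarith
  have hbern : 1 - q * η ≤ (1 - η) ^ q := by
    have h := one_add_mul_self_le_rpow_one_add (s := -η) (by linarith) hq1
    rw [show (1 : ℝ) + -η = 1 - η by ring] at h
    linarith
  have hsq : (1 - η) ^ q ≤ (thinness (X j) - 1) ^ q := Real.rpow_le_rpow hs0 hs1 hq0.le
  have h2le : (2 : ℝ) ≤ ((thinness (X j) - 1) ^ q + 1) + q * η := by linarith
  have hqη : (0 : ℝ) ≤ q * η := by positivity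
  have htj1 : (0 : ℝ) ≤ thinness (X j) - 1 := by linarith [h1tj j]
  have hnn : (0 : ℝ) ≤ (thinness (X j) - 1) ^ q + 1 := by
    have := Real.rpow_nonneg htj1 q; linarith
  have hstep : (2 : ℝ) ^ (1 / q) ≤ (((thinness (X j) - 1) ^ q + 1) + q * η) ^ (1 / q) :=
    Real.rpow_le_rpow (by norm_num) h2le (by positivity)
  have hsplit : (((thinness (X j) - 1) ^ q + 1) + q * η) ^ (1 / q)
      ≤ ((thinness (X j) - 1) ^ q + 1) ^ (1 / q) + (q * η) ^ (1 / q) :=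
    rpow_add_le hq1 hnn hqη
  have hqηε : (q * η) ^ (1 / q) ≤ ε := by
    have h1 : q * η ≤ ε ^ q := by
      calc q * η ≤ q * (ε ^ q / q) :=
            mul_le_mul_of_nonneg_left (min_le_left _ _) hq0.le
        _ = ε ^ q := by field_simp
    calc (q * η) ^ (1 / q) ≤ (ε ^ q) ^ (1 / q) :=
          Real.rpow_le_rpow hqη h1 (by positivity)
      _ = ε := by rw [one_div, Real.rpow_rpow_inv hε.le hqne]
  have hle_sup : ((thinness (X j) - 1) ^ q + 1) ^ (1 / q)
      ≤ ⨆ j, ((thinness (X j) - 1) ^ q + 1) ^ (1 / q) := le_ciSup hbdd j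
  linarith
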